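/- Let E be a finite set and f : 2^E → ℤ a set function that is monotone, submodular, and satisfies f(I) ≥ 0 for every nonempty I ⊆ E. Then its Dilworth truncation f^D is monotone and submodular, and hence (E, f^D) is a polymatroid. -/

import Mathlib

/-- `P` is a partition of the finite set `F` into nonempty parts. -/
def IsPartitionOf {α : Type*} [DecidableEq α] (P : Finset (Finset α)) (F : Finset α) : Prop :=
  (∀ S ∈ P, S.Nonempty) ∧ (∀ S ∈ P, ∀ T ∈ P, S ≠ T → Disjoint S T) ∧ P.sup id = F

/-- The Dilworth truncation `f^D` of a set function `f`. -/
noncomputable def dilworth {α : Type*} [DecidableEq α] (f : Finset α → ℤ) (F : Finset α) : ℤ :=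
  if F = ∅ then 0
  else sInf {s : ℤ | ∃ P : Finset (Finset α), IsPartitionOf P F ∧ s = ∑ S ∈ P, f S}

section Aux

variable {α : Type*} [DecidableEq α] (f : Finset α → ℤ)

/-- coverage count of a point by a multiset of finsets -/
def covN (L : Multiset (Finset α)) (x : α) : ℕ := L.countP (fun S => x ∈ S)

lemma covN_cons (A : Finset α) (L : Multiset (Finset α)) (x : α) :
    covN (A ::ₘ L) x = (if x ∈ A then 1 else 0) + covN L x := by
  simp [covN, Multiset.countP_cons]
  by_cases h : x ∈ A <;> simp [h] <;> omega

lemma partition_sum_nonneg (hnonneg : ∀ I : Finset α, I.Nonempty → 0 ≤ f I)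
    {P : Finset (Finset α)} {F : Finset α} (hP : IsPartitionOf P F) :
    0 ≤ ∑ S ∈ P, f S :=
  Finset.sum_nonneg fun S hS => hnonneg S (hP.1 S hS)

lemma bddBelow_sums (hnonneg : ∀ I : Finset α, I.Nonempty → 0 ≤ f I) (F : Finset α) :
    BddBelow {s : ℤ | ∃ P : Finset (Finset α), IsPartitionOf P F ∧ s = ∑ S ∈ P, f S} := by
  refine ⟨0, ?_⟩
  rintro s ⟨P, hP, rfl⟩
  exact partition_sum_nonneg f hnonneg hP

lemma trivial_partition {F : Finset α} (hF : F.Nonempty) : IsPartitionOf {F} F := by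
  refine ⟨?_, ?_, ?_⟩
  · intro S hS; simp at hS; subst hS; exact hF
  · intro S hS T hT hne; simp at hS hT; subst hS; subst hT; exact absurd rfl hne
  · simp

lemma partition_of_empty {P : Finset (Finset α)} (hP : IsPartitionOf P (∅ : Finset α)) :
    P = ∅ := by
  by_contra h
  obtain ⟨S, hS⟩ := Finset.nonempty_of_ne_empty h
  obtain ⟨x, hx⟩ := hP.1 S hS
  have : S ⊆ P.sup id := Finset.le_sup (f := id) hS
  rw [hP.2.2] at this
  exact absurd (this hx) (by simp)

lemma dilworth_le {P : Finset (Finset α)} {F : Finset α}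
    (hnonneg : ∀ I : Finset α, I.Nonempty → 0 ≤ f I)
    (hP : IsPartitionOf P F) : dilworth f F ≤ ∑ S ∈ P, f S := by
  by_cases hF : F = ∅
  · subst hF
    rw [partition_of_empty hP]
    simp [dilworth]
  · rw [dilworth, if_neg hF]
    exact csInf_le (bddBelow_sums f hnonneg F) ⟨P, hP, rfl⟩

lemma dilworth_nonneg (hnonneg : ∀ I : Finset α, I.Nonempty → 0 ≤ f I) (F : Finset α) :
    0 ≤ dilworth f F := by
  by_cases hF : F = ∅
  · simp [hF, dilworth]
  · rw [dilworth, if_neg hF]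
    refine le_csInf ⟨∑ S ∈ ({F} : Finset (Finset α)), f S,
      {F}, trivial_partition (Finset.nonempty_of_ne_empty hF), rfl⟩ ?_
    rintro s ⟨P, hP, rfl⟩
    exact partition_sum_nonneg f hnonneg hP

lemma dilworth_exists (hnonneg : ∀ I : Finset α, I.Nonempty → 0 ≤ f I)
    {F : Finset α} (hF : F.Nonempty) :
    ∃ P : Finset (Finset α), IsPartitionOf P F ∧ dilworth f F = ∑ S ∈ P, f S := by
  have hne : {s : ℤ | ∃ P : Finset (Finset α), IsPartitionOf P F ∧ s = ∑ S ∈ P, f S}.Nonempty :=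
    ⟨∑ S ∈ ({F} : Finset (Finset α)), f S, {F}, trivial_partition hF, rfl⟩
  have := Int.csInf_mem hne (bddBelow_sums f hnonneg F)
  obtain ⟨P, hP, hs⟩ := this
  refine ⟨P, hP, ?_⟩
  rw [dilworth, if_neg (Finset.nonempty_iff_ne_empty.mp hF), hs]

/-- From a multiset with coverage exactly the indicator of `F`, extract a partition. -/
lemma dilworth_le_of_cov (hnonneg : ∀ I : Finset α, I.Nonempty → 0 ≤ f I)
    {L : Multiset (Finset α)} {F : Finset α}
    (hne : ∀ S ∈ L, S.Nonempty)
    (hcov : ∀ x, covN L x = if x ∈ F then 1 else 0) :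
    dilworth f F ≤ (L.map f).sum := by
  -- L is nodup
  have hfilter : ∀ x : α, covN L x = Multiset.card (L.filter (fun S => x ∈ S)) := by
    intro x; exact Multiset.countP_eq_card_filter _ _
  have hnodup : L.Nodup := by
    rw [Multiset.nodup_iff_count_le_one]
    intro A
    by_cases hA : A ∈ L
    · obtain ⟨x, hx⟩ := hne A hA
      have h1 : Multiset.count A (L.filter (fun S => x ∈ S)) = Multiset.count A L := by
        rw [Multiset.count_filter, if_pos hx]
      have h2 := Multiset.count_le_card A (L.filter (fun S => x ∈ S))
      have h3 := hfilter x
      have h4 := hcov x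
      by_cases hxF : x ∈ F <;> simp [hxF] at h4 <;> omega
    · simp [Multiset.count_eq_zero_of_notMem hA]
  set P : Finset (Finset α) := ⟨L, hnodup⟩ with hPdef
  have hmemP : ∀ S, S ∈ P ↔ S ∈ L := fun S => Iff.rfl
  have hPart : IsPartitionOf P F := by
    refine ⟨fun S hS => hne S hS, ?_, ?_⟩
    · intro S hS T hT hST
      rw [Finset.disjoint_left]
      intro x hxS hxT
      have hsub : ({S, T} : Finset (Finset α)) ⊆ P.filter (fun A => x ∈ A) := by
        intro A hA
        simp at hA
        rcases hA with rfl | rfl <;> simp [Finset.mem_filter, hS, hT, hxS, hxT]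
      have hcard : 2 ≤ (P.filter (fun A => x ∈ A)).card := by
        have := Finset.card_le_card hsub
        rwa [Finset.card_insert_of_notMem (by simp [hST]), Finset.card_singleton] at this
      have : (P.filter (fun A => x ∈ A)).card = covN L x := by
        rw [hfilter x]
        rfl
      have h4 := hcov x
      by_cases hxF : x ∈ F <;> simp [hxF] at h4 <;> omega
    · apply Finset.Subset.antisymm
      · intro x hx
        rw [Finset.mem_sup] at hx
        obtain ⟨S, hS, hxS⟩ := hx
        have : 0 < covN L x := by
          rw [hfilter x]
          exact Multiset.card_pos_iff_exists_mem.mpr ⟨S, Multiset.mem_filter.mpr ⟨hS, hxS⟩⟩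
        have h4 := hcov x
        by_contra hxF
        simp [hxF] at h4
        omega
      · intro x hx
        have h4 := hcov x
        rw [if_pos hx] at h4
        have : 0 < covN L x := by omega
        rw [hfilter x, Multiset.card_pos_iff_exists_mem] at this
        obtain ⟨S, hS⟩ := this
        rw [Multiset.mem_filter] at hS
        rw [Finset.mem_sup]
        exact ⟨S, hS.1, hS.2⟩
  have hsum : ∑ S ∈ P, f S = (L.map f).sum := rfl
  rw [← hsum]
  exact dilworth_le f hnonneg hPart

/-- the measure used for uncrossing induction -/
def μ {α : Type*} [DecidableEq α] (n : ℕ) (L : Multiset (Finset α)) : ℕ :=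
  (L.map (fun S => n * n - S.card * S.card)).sum


/-- Terminal (laminar) case of the uncrossing argument. -/
lemma terminal_case (hnonneg : ∀ I : Finset α, I.Nonempty → 0 ≤ f I)
    {L : Multiset (Finset α)} {X Y : Finset α}
    (hne : ∀ S ∈ L, S.Nonempty)
    (hcov : ∀ x, covN L x = (if x ∈ X then 1 else 0) + (if x ∈ Y then 1 else 0))
    (hlam : ∀ A B : Finset α, A ∈ L → B ∈ L.erase A → A ⊆ B ∨ B ⊆ A ∨ Disjoint A B) :
    dilworth f (X ∪ Y) + dilworth f (X ∩ Y) ≤ (L.map f).sum := by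
  classical
  set M : Finset (Finset α) :=
    L.toFinset.filter (fun A => ∀ B ∈ L.toFinset, A ⊆ B → A = B) with hMdef
  have hlam' : ∀ A ∈ L.toFinset, ∀ B ∈ L.toFinset, A ≠ B → A ⊆ B ∨ B ⊆ A ∨ Disjoint A B := by
    intro A hA B hB hAB
    rw [Multiset.mem_toFinset] at hA hB
    exact hlam A B hA ((Multiset.mem_erase_of_ne (Ne.symm hAB)).mpr hB)
  have hmax : ∀ S ∈ L, ∃ A ∈ M, S ⊆ A := by
    intro S hS
    set T := L.toFinset.filter (fun B => S ⊆ B) with hTdef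
    have hST : S ∈ T := by
      rw [hTdef, Finset.mem_filter, Multiset.mem_toFinset]
      exact ⟨hS, Finset.Subset.refl S⟩
    obtain ⟨A, hAT, hmaxA⟩ : ∃ A ∈ T, ∀ B ∈ T, ¬ A < B := by
      obtain ⟨A, hA⟩ := Finset.exists_maximal (s := T) ⟨S, hST⟩
      exact ⟨A, hA.1, fun B hB hlt => lt_irrefl A (lt_of_lt_of_le hlt (hA.2 hB hlt.le))⟩
    rw [hTdef, Finset.mem_filter] at hAT
    refine ⟨A, ?_, hAT.2⟩
    rw [hMdef, Finset.mem_filter]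
    refine ⟨hAT.1, fun B hB hABsub => ?_⟩
    by_contra hne'
    have hBT : B ∈ T := by
      rw [hTdef, Finset.mem_filter]
      exact ⟨hB, hAT.2.trans hABsub⟩
    exact hmaxA B hBT (Finset.lt_iff_ssubset.mpr
      (Finset.ssubset_iff_subset_ne.mpr ⟨hABsub, hne'⟩))
  have hMdisj : ∀ A ∈ M, ∀ B ∈ M, A ≠ B → Disjoint A B := by
    intro A hA B hB hAB
    rw [hMdef, Finset.mem_filter] at hA hB
    rcases hlam' A hA.1 B hB.1 hAB with h | h | h
    · exact absurd (hA.2 B hB.1 h) hAB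
    · exact absurd (hB.2 A hA.1 h).symm hAB
    · exact h
  have hMle : M.val ≤ L := by
    rw [hMdef, Finset.filter_val]
    calc Multiset.filter _ L.toFinset.val ≤ L.toFinset.val := Multiset.filter_le _ _
    _ = L.dedup := by rw [Multiset.toFinset_val]
    _ ≤ L := Multiset.dedup_le L
  have hmemM : ∀ S ∈ M, S ∈ L := fun S hS => Multiset.mem_of_le hMle (by exact hS)
  have hfiltcard : ∀ (N : Finset (Finset α)) (x : α),
      covN N.val x = (N.filter (fun S => x ∈ S)).card := by
    intro N x
    rw [covN, Multiset.countP_eq_card_filter]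
    rfl
  have hcovpos : ∀ x, 0 < covN L x → ∃ S ∈ L, x ∈ S := by
    intro x hx
    rw [covN, Multiset.countP_eq_card_filter, Multiset.card_pos_iff_exists_mem] at hx
    obtain ⟨S, hS⟩ := hx
    rw [Multiset.mem_filter] at hS
    exact ⟨S, hS.1, hS.2⟩
  have hcovM : ∀ x, covN M.val x = if x ∈ X ∪ Y then 1 else 0 := by
    intro x
    rw [hfiltcard M x]
    by_cases hx : x ∈ X ∪ Y
    · rw [if_pos hx]
      have hpos : 0 < covN L x := by
        have h4 := hcov x
        rw [Finset.mem_union] at hx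
        rcases hx with hx | hx
        · simp [hx] at h4; omega
        · simp [hx] at h4; omega
      obtain ⟨S, hS, hxS⟩ := hcovpos x hpos
      obtain ⟨A, hAM, hSA⟩ := hmax S hS
      have hfA : M.filter (fun S => x ∈ S) = {A} := by
        apply Finset.ext
        intro B
        rw [Finset.mem_filter, Finset.mem_singleton]
        constructor
        · rintro ⟨hBM, hxB⟩
          by_contra hBA
          exact Finset.disjoint_left.mp (hMdisj B hBM A hAM hBA) hxB (hSA hxS)
        · rintro rfl
          exact ⟨hAM, hSA hxS⟩
      rw [hfA, Finset.card_singleton]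
    · rw [if_neg hx]
      have h0 : covN L x = 0 := by
        have h4 := hcov x
        rw [Finset.mem_union] at hx
        push_neg at hx
        simp [hx.1, hx.2] at h4
        exact h4
      rw [covN, Multiset.countP_eq_zero] at h0
      rw [Finset.card_eq_zero]
      apply Finset.filter_eq_empty_iff.mpr
      intro B hB
      exact h0 B (hmemM B hB)
  set L' := L - M.val with hL'def
  have hLsplit : M.val + L' = L := add_tsub_cancel_of_le hMle
  have hmemL' : ∀ S ∈ L', S ∈ L := fun S hS => Multiset.mem_of_le (Multiset.sub_le_self _ _) hS
  have hcovL' : ∀ x, covN L' x = if x ∈ X ∩ Y then 1 else 0 := by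
    intro x
    have hadd : covN L x = covN M.val x + covN L' x := by
      rw [← hLsplit]
      simp [covN, Multiset.countP_add]
    have h1 := hcov x
    have h2 := hcovM x
    simp only [Finset.mem_inter]
    simp only [Finset.mem_union] at h2
    by_cases hX : x ∈ X <;> by_cases hY : x ∈ Y <;>
      simp [hX, hY] at h1 h2 ⊢ <;> omega
  have hd1 : dilworth f (X ∪ Y) ≤ (M.val.map f).sum :=
    dilworth_le_of_cov f hnonneg (fun S hS => hne S (hmemM S hS)) hcovM
  have hd2 : dilworth f (X ∩ Y) ≤ (L'.map f).sum :=
    dilworth_le_of_cov f hnonneg (fun S hS => hne S (hmemL' S hS)) hcovL'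
  have hsum : (L.map f).sum = (M.val.map f).sum + (L'.map f).sum := by
    rw [← hLsplit, Multiset.map_add, Multiset.sum_add]
  rw [hsum]
  exact add_le_add hd1 hd2


lemma sq_ineq {u i a b : ℕ} (h1 : u + i = a + b) (h2 : a < u) (h3 : b < u) :
    a * a + b * b < u * u + i * i := by
  zify at *
  nlinarith [mul_pos (sub_pos.mpr h2) (sub_pos.mpr h3)]

lemma uncross_main {β : Type*} [Fintype β] [DecidableEq β] (f : Finset β → ℤ)
    (hsub : ∀ X Y : Finset β, f (X ∪ Y) + f (X ∩ Y) ≤ f X + f Y)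
    (hnonneg : ∀ I : Finset β, I.Nonempty → 0 ≤ f I) :
    ∀ (N : ℕ) (L : Multiset (Finset β)) (X Y : Finset β),
      μ (Fintype.card β) L ≤ N →
      (∀ S ∈ L, S.Nonempty) →
      (∀ x, covN L x = (if x ∈ X then 1 else 0) + (if x ∈ Y then 1 else 0)) →
      dilworth f (X ∪ Y) + dilworth f (X ∩ Y) ≤ (L.map f).sum := by
  classical
  intro N
  induction N using Nat.strong_induction_on with
  | _ N ih =>
    intro L X Y hμ hne hcov
    by_cases hC : ∃ A B L₂, L = A ::ₘ B ::ₘ L₂ ∧ ¬A ⊆ B ∧ ¬B ⊆ A ∧ (A ∩ B).Nonempty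
    · obtain ⟨A, B, L₂, hL, hAB, hBA, hABi⟩ := hC
      subst hL
      set n := Fintype.card β with hn
      set L₁ := (A ∪ B) ::ₘ (A ∩ B) ::ₘ L₂ with hL₁
      -- cardinality facts
      have hu : (A ∪ B).card + (A ∩ B).card = A.card + B.card :=
        Finset.card_union_add_card_inter A B
      have hcA : A.card < (A ∪ B).card := by
        apply Finset.card_lt_card
        rw [Finset.ssubset_iff_subset_ne]
        refine ⟨Finset.subset_union_left, fun h => hBA ?_⟩
        rw [h]
        exact Finset.subset_union_right
      have hcB : B.card < (A ∪ B).card := by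
        apply Finset.card_lt_card
        rw [Finset.ssubset_iff_subset_ne]
        refine ⟨Finset.subset_union_right, fun h => hAB ?_⟩
        rw [h]
        exact Finset.subset_union_left
      have hsq : A.card * A.card + B.card * B.card <
          (A ∪ B).card * (A ∪ B).card + (A ∩ B).card * (A ∩ B).card :=
        sq_ineq hu hcA hcB
      have hbound : ∀ S : Finset β, S.card * S.card ≤ n * n := fun S =>
        Nat.mul_le_mul (Finset.card_le_univ S) (Finset.card_le_univ S)
      have hμlt : μ n L₁ < μ n ((A ::ₘ B ::ₘ L₂)) := by
        simp only [hL₁, μ, Multiset.map_cons, Multiset.sum_cons]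
        have b1 := hbound (A ∪ B)
        have b2 := hbound (A ∩ B)
        have b3 := hbound A
        have b4 := hbound B
        omega
      have hμ1 : μ n L₁ < N := lt_of_lt_of_le hμlt hμ
      have hne1 : ∀ S ∈ L₁, S.Nonempty := by
        intro S hS
        rw [hL₁, Multiset.mem_cons, Multiset.mem_cons] at hS
        rcases hS with rfl | rfl | hS
        · exact (hne A (Multiset.mem_cons_self _ _)).mono Finset.subset_union_left
        · exact hABi
        · exact hne S (Multiset.mem_cons_of_mem (Multiset.mem_cons_of_mem hS))
      have hcov1 : ∀ x, covN L₁ x = (if x ∈ X then 1 else 0) + (if x ∈ Y then 1 else 0) := by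
        intro x
        have h0 := hcov x
        rw [covN_cons, covN_cons] at h0
        rw [hL₁, covN_cons, covN_cons]
        by_cases hxA : x ∈ A <;> by_cases hxB : x ∈ B <;>
          simp [hxA, hxB, Finset.mem_union, Finset.mem_inter] at h0 ⊢ <;> omega
      have hstep := ih (μ n L₁) hμ1 L₁ X Y (le_refl _) hne1 hcov1
      have hsumle : (L₁.map f).sum ≤ ((A ::ₘ B ::ₘ L₂).map f).sum := by
        simp only [hL₁, Multiset.map_cons, Multiset.sum_cons]
        have := hsub A B
        linarith
      exact hstep.trans hsumle
    · push_neg at hC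
      apply terminal_case f hnonneg hne hcov
      intro A B hA hB
      by_contra h
      push_neg at h
      obtain ⟨h1, h2, h3⟩ := h
      have hL : L = A ::ₘ B ::ₘ (L.erase A).erase B := by
        rw [Multiset.cons_erase hB, Multiset.cons_erase hA]
      exact (Finset.not_disjoint_iff_nonempty_inter.mp h3).ne_empty
        (hC A B ((L.erase A).erase B) hL h1 h2)


lemma dilworth_empty : dilworth f (∅ : Finset α) = 0 := by simp [dilworth]

lemma covN_val (N : Finset (Finset α)) (x : α) :
    covN N.val x = (N.filter (fun S => x ∈ S)).card := by
  rw [covN, Multiset.countP_eq_card_filter]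
  rfl

lemma partition_cov {P : Finset (Finset α)} {F : Finset α} (hP : IsPartitionOf P F) (x : α) :
    covN P.val x = if x ∈ F then 1 else 0 := by
  rw [covN_val]
  by_cases hx : x ∈ F
  · rw [if_pos hx]
    rw [← hP.2.2, Finset.mem_sup] at hx
    obtain ⟨S, hS, hxS⟩ := hx
    have : P.filter (fun T => x ∈ T) = {S} := by
      apply Finset.ext
      intro T
      rw [Finset.mem_filter, Finset.mem_singleton]
      constructor
      · rintro ⟨hT, hxT⟩
        by_contra hTS
        exact Finset.disjoint_left.mp (hP.2.1 T hT S hS hTS) hxT hxS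
      · rintro rfl
        exact ⟨hS, hxS⟩
    rw [this, Finset.card_singleton]
  · rw [if_neg hx, Finset.card_eq_zero]
    apply Finset.filter_eq_empty_iff.mpr
    intro T hT hxT
    apply hx
    rw [← hP.2.2, Finset.mem_sup]
    exact ⟨T, hT, hxT⟩

end Aux

/-- If `f : 2^E → ℤ` is monotone, submodular and non-negative on nonempty
sets, then its Dilworth truncation `f^D` is monotone and submodular (and `f^D ∅ = 0`), so
`(E, f^D)` is a polymatroid. -/
theorem stmt1 {α : Type*} [Fintype α] [DecidableEq α] (f : Finset α → ℤ)
    (hsub : ∀ X Y : Finset α, f (X ∪ Y) + f (X ∩ Y) ≤ f X + f Y)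
    (hmono : ∀ X Y : Finset α, X ⊆ Y → f X ≤ f Y)
    (hnonneg : ∀ I : Finset α, I.Nonempty → 0 ≤ f I) :
    (∀ X Y : Finset α, X ⊆ Y → dilworth f X ≤ dilworth f Y) ∧
    (∀ X Y : Finset α, dilworth f (X ∪ Y) + dilworth f (X ∩ Y) ≤ dilworth f X + dilworth f Y) ∧
    dilworth f ∅ = 0 := by
  classical
  refine ⟨?_, ?_, dilworth_empty f⟩
  · -- monotonicity
    intro X Y hXY
    by_cases hX : X = ∅
    · subst hX
      rw [dilworth_empty]
      exact dilworth_nonneg f hnonneg Y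
    · have hY : Y.Nonempty := (Finset.nonempty_of_ne_empty hX).mono hXY
      obtain ⟨Q, hQ, hQval⟩ := dilworth_exists f hnonneg hY
      set Qf := Q.filter (fun S => (S ∩ X).Nonempty) with hQfdef
      set P := Qf.image (fun S => S ∩ X) with hPdef
      have hinj : ∀ S ∈ Qf, ∀ T ∈ Qf, S ∩ X = T ∩ X → S = T := by
        intro S hS T hT hST
        rw [hQfdef, Finset.mem_filter] at hS hT
        by_contra hne'
        obtain ⟨x, hx⟩ := hS.2
        have hxT : x ∈ T ∩ X := hST ▸ hx
        exact Finset.disjoint_left.mp (hQ.2.1 S hS.1 T hT.1 hne')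
          (Finset.mem_inter.mp hx).1 (Finset.mem_inter.mp hxT).1
      have hPart : IsPartitionOf P X := by
        refine ⟨?_, ?_, ?_⟩
        · intro S hS
          rw [hPdef, Finset.mem_image] at hS
          obtain ⟨T, hT, rfl⟩ := hS
          rw [hQfdef, Finset.mem_filter] at hT
          exact hT.2
        · intro S hS T hT hST
          rw [hPdef, Finset.mem_image] at hS hT
          obtain ⟨S', hS', rfl⟩ := hS
          obtain ⟨T', hT', rfl⟩ := hT
          have hS'T' : S' ≠ T' := fun h => hST (by rw [h])
          rw [hQfdef, Finset.mem_filter] at hS' hT'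
          exact Finset.disjoint_of_subset_left Finset.inter_subset_left
            (Finset.disjoint_of_subset_right Finset.inter_subset_left
              (hQ.2.1 S' hS'.1 T' hT'.1 hS'T'))
        · apply Finset.Subset.antisymm
          · intro x hx
            rw [Finset.mem_sup] at hx
            obtain ⟨S, hS, hxS⟩ := hx
            rw [hPdef, Finset.mem_image] at hS
            obtain ⟨T, _, rfl⟩ := hS
            exact (Finset.mem_inter.mp hxS).2
          · intro x hx
            have hxY : x ∈ Y := hXY hx
            rw [← hQ.2.2, Finset.mem_sup] at hxY
            obtain ⟨S, hS, hxS⟩ := hxY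
            have hSX : x ∈ S ∩ X := Finset.mem_inter.mpr ⟨hxS, hx⟩
            rw [Finset.mem_sup]
            refine ⟨S ∩ X, ?_, hSX⟩
            rw [hPdef, Finset.mem_image]
            exact ⟨S, by rw [hQfdef, Finset.mem_filter]; exact ⟨hS, ⟨x, hSX⟩⟩, rfl⟩
      have h1 : dilworth f X ≤ ∑ S ∈ P, f S := dilworth_le f hnonneg hPart
      have h2 : ∑ S ∈ P, f S = ∑ S ∈ Qf, f (S ∩ X) := Finset.sum_image hinj
      have h3 : ∑ S ∈ Qf, f (S ∩ X) ≤ ∑ S ∈ Qf, f S :=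
        Finset.sum_le_sum fun S _ => hmono _ _ Finset.inter_subset_left
      have h4 : ∑ S ∈ Qf, f S ≤ ∑ S ∈ Q, f S :=
        Finset.sum_le_sum_of_subset_of_nonneg (Finset.filter_subset _ _)
          fun S hS _ => hnonneg S (hQ.1 S hS)
      rw [hQval]
      linarith
  · -- submodularity
    intro X Y
    by_cases hX : X = ∅
    · subst hX
      simp [dilworth_empty]
    by_cases hY : Y = ∅
    · subst hY
      simp [dilworth_empty]
    obtain ⟨P, hP, hPv⟩ := dilworth_exists f hnonneg (Finset.nonempty_of_ne_empty hX)
    obtain ⟨Q, hQ, hQv⟩ := dilworth_exists f hnonneg (Finset.nonempty_of_ne_empty hY)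
    set L := P.val + Q.val with hLdef
    have hne : ∀ S ∈ L, S.Nonempty := by
      intro S hS
      rw [hLdef, Multiset.mem_add] at hS
      rcases hS with hS | hS
      · exact hP.1 S hS
      · exact hQ.1 S hS
    have hcov : ∀ x, covN L x = (if x ∈ X then 1 else 0) + (if x ∈ Y then 1 else 0) := by
      intro x
      have : covN L x = covN P.val x + covN Q.val x := by
        rw [hLdef, covN, covN, covN, Multiset.countP_add]
      rw [this, partition_cov hP x, partition_cov hQ x]
    have hmain := uncross_main f hsub hnonneg (μ (Fintype.card α) L) L X Y
      (le_refl _) hne hcov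
    have hsum : (L.map f).sum = (∑ S ∈ P, f S) + (∑ S ∈ Q, f S) := by
      rw [hLdef, Multiset.map_add, Multiset.sum_add]
      rfl
    rw [hPv, hQv]
    rw [hsum] at hmain
    exact hmain
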